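/- Let r > 0, q > 0, T > 0. Define f(S, A) = 0 for S < A, f = (A/2)(q − r) for S = A, and f(S, A) = −rA + qS − (1/T)·A·ln(A/S) for S > A, on the domain (0,∞)². Then the boundary of the set {(S,A) : f(S,A) > 0} equals {(S,A) ∈ (0,∞)² : S/A = max(1, G̃)}, where G̃ is the unique positive root of r − qG − (1/T)·ln G = 0. -/

import Mathlib

/-- Geometric-average Asian call: the boundary in `(0,∞)²` of the positivity set of the
bonus function is `{(S,A) : S/A = max(1, G̃)}`, `G̃` the unique positive root of
`r − qG − (1/T)ln G = 0`. -/
theorem stmt_9 (r q T : ℝ) (hr : 0 < r) (hq : 0 < q) (hT : 0 < T)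
    (G : ℝ) (hG : 0 < G) (hGroot : r - q * G - (1 / T) * Real.log G = 0)
    (f : ℝ → ℝ → ℝ)
    (hlt : ∀ S A : ℝ, S < A → f S A = 0)
    (heq : ∀ A : ℝ, f A A = (A / 2) * (q - r))
    (hgt : ∀ S A : ℝ, A < S → f S A = -r * A + q * S - (1 / T) * A * Real.log (A / S)) :
    frontier {p : ↥(Set.Ioi (0 : ℝ) ×ˢ Set.Ioi (0 : ℝ)) | 0 < f (p : ℝ × ℝ).1 (p : ℝ × ℝ).2} =
      {p : ↥(Set.Ioi (0 : ℝ) ×ˢ Set.Ioi (0 : ℝ)) |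
        (p : ℝ × ℝ).1 / (p : ℝ × ℝ).2 = max 1 G} := by
  set U : Set (ℝ × ℝ) := Set.Ioi (0 : ℝ) ×ˢ Set.Ioi (0 : ℝ) with hUdef
  set M : ℝ := max 1 G with hMdef
  have hM1 : (1 : ℝ) ≤ M := le_max_left _ _
  have hMG : G ≤ M := le_max_right _ _
  have hM0 : (0 : ℝ) < M := lt_of_lt_of_le one_pos hM1
  have hT' : (0 : ℝ) < 1 / T := by positivity
  -- auxiliary function E A s = -r*A + q*s + (1/T)*A*(log s - log A)
  set E : ℝ → ℝ → ℝ := fun A s => -r * A + q * s + (1 / T) * A * (Real.log s - Real.log A)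
    with hEdef
  have hEmono : ∀ A s₁ s₂ : ℝ, 0 < A → 0 < s₁ → s₁ < s₂ → E A s₁ < E A s₂ := by
    intro A s₁ s₂ hA hs₁ h12
    have hlog : Real.log s₁ < Real.log s₂ := Real.log_lt_log hs₁ h12
    simp only [hEdef]
    nlinarith [mul_pos (mul_pos hT' hA) (sub_pos.mpr hlog)]
  have hEroot : ∀ A : ℝ, 0 < A → E A (G * A) = 0 := by
    intro A hA
    have : Real.log (G * A) = Real.log G + Real.log A :=
      Real.log_mul (ne_of_gt hG) (ne_of_gt hA)
    simp only [hEdef, this]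
    nlinarith [hGroot]
  have hfE : ∀ S A : ℝ, 0 < S → 0 < A → A < S → f S A = E A S := by
    intro S A hS hA hAS
    rw [hgt S A hAS, Real.log_div (ne_of_gt hA) (ne_of_gt hS)]
    simp only [hEdef]; ring
  -- key lemma 1: strict positivity above the line S = M*A
  have hpos : ∀ S A : ℝ, 0 < S → 0 < A → M * A < S → 0 < f S A := by
    intro S A hS hA hMA
    have hAS : A < S := by nlinarith
    rw [hfE S A hS hA hAS]
    have h1 : E A (G * A) < E A S := hEmono A (G * A) S hA (by positivity) (by nlinarith)
    rw [hEroot A hA] at h1; exact h1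
  -- if G > 1 then q < r
  have hqr : 1 < G → q < r := by
    intro h1G
    have hlg : 0 < Real.log G := Real.log_pos h1G
    nlinarith [hGroot]
  -- key lemma 2: positivity forces S ≥ M*A
  have hle : ∀ S A : ℝ, 0 < S → 0 < A → 0 < f S A → M * A ≤ S := by
    intro S A hS hA hf
    by_contra hcon
    push_neg at hcon
    rcases lt_trichotomy S A with h | h | h
    · rw [hlt S A h] at hf; exact lt_irrefl 0 hf
    · subst h
      have h1M : 1 < M := by
        by_contra h1M; push_neg at h1M; nlinarith
      have h1G : 1 < G := by
        rcases le_or_gt G 1 with hG1 | hG1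
        · rw [hMdef] at h1M; rw [max_eq_left hG1] at h1M; linarith
        · exact hG1
      rw [heq S] at hf
      have := hqr h1G
      nlinarith
    · have h1M : 1 < M := by nlinarith
      have h1G : 1 < G := by
        rcases le_or_gt G 1 with hG1 | hG1
        · rw [hMdef] at h1M; rw [max_eq_left hG1] at h1M; linarith
        · exact hG1
      have hMG' : M = G := by rw [hMdef]; exact max_eq_right (le_of_lt h1G)
      rw [hfE S A hS hA h] at hf
      have h2 : E A S < E A (G * A) := hEmono A S (G * A) hA hS (by rw [← hMG']; exact hcon)
      rw [hEroot A hA] at h2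
      linarith
  -- topology setup
  have hUopen : IsOpen U := IsOpen.prod isOpen_Ioi isOpen_Ioi
  set W : Set (ℝ × ℝ) := {p : ℝ × ℝ | p ∈ U ∧ 0 < f p.1 p.2} with hWdef
  have hset : {p : ↥U | 0 < f (p : ℝ × ℝ).1 (p : ℝ × ℝ).2} = Subtype.val ⁻¹' W := by
    ext p
    simp only [Set.mem_setOf_eq, Set.mem_preimage, hWdef, p.2, true_and]
  rw [hset, ← hUopen.isOpenMap_subtype_val.preimage_frontier_eq_frontier_preimage
    continuous_subtype_val]
  -- W is contained in the closed half-region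
  have hWsub : W ⊆ {p : ℝ × ℝ | M * p.2 ≤ p.1} := by
    rintro ⟨S, A⟩ ⟨hU, hf⟩
    exact hle S A hU.1 hU.2 hf
  -- the strictly-above open region is inside W
  have hVsub : {p : ℝ × ℝ | 0 < p.1 ∧ 0 < p.2 ∧ M * p.2 < p.1} ⊆ W := by
    rintro ⟨S, A⟩ ⟨hS, hA, hMA⟩
    exact ⟨⟨hS, hA⟩, hpos S A hS hA hMA⟩
  have hVopen : IsOpen {p : ℝ × ℝ | 0 < p.1 ∧ 0 < p.2 ∧ M * p.2 < p.1} := by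
    apply IsOpen.inter (isOpen_lt continuous_const continuous_fst)
    exact IsOpen.inter (isOpen_lt continuous_const continuous_snd)
      (isOpen_lt (continuous_const.mul continuous_snd) continuous_fst)
  ext p
  obtain ⟨⟨S, A⟩, hSA⟩ := p
  have hS : 0 < S := hSA.1
  have hA : 0 < A := hSA.2
  simp only [Set.mem_preimage, Set.mem_setOf_eq]
  rw [div_eq_iff (ne_of_gt hA)]
  constructor
  · intro hfr
    by_contra hne
    rcases lt_or_gt_of_ne hne with hlt' | hgt'
    · -- S < M*A : p is not in closure W
      have hcl : closure W ⊆ {p : ℝ × ℝ | M * p.2 ≤ p.1} :=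
        closure_minimal hWsub (isClosed_le (continuous_const.mul continuous_snd) continuous_fst)
      have := hcl hfr.1
      simp only [Set.mem_setOf_eq] at this
      linarith
    · -- S > M*A : p is in interior W
      have hint : ((S, A) : ℝ × ℝ) ∈ interior W :=
        interior_maximal hVsub hVopen ⟨hS, hA, hgt'⟩
      exact hfr.2 hint
  · intro hSM
    constructor
    · -- closure: approach from the right
      have hten : Filter.Tendsto (fun n : ℕ => ((S + 1 / (n + 1), A) : ℝ × ℝ))
          Filter.atTop (nhds (S, A)) := by
        have h1 : Filter.Tendsto (fun n : ℕ => S + 1 / ((n : ℝ) + 1))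
            Filter.atTop (nhds S) := by
          have := tendsto_one_div_add_atTop_nhds_zero_nat (𝕜 := ℝ)
          have h2 := Filter.Tendsto.const_add S this
          simpa using h2
        exact Filter.Tendsto.prodMk_nhds h1 tendsto_const_nhds
      apply mem_closure_of_tendsto hten
      filter_upwards with n
      have hpos' : (0 : ℝ) < 1 / ((n : ℝ) + 1) := by positivity
      refine ⟨⟨by simp only [Set.mem_Ioi]; linarith, hA⟩, ?_⟩
      exact hpos (S + 1 / ((n : ℝ) + 1)) A (by linarith) hA (by linarith [hSM])
    · -- not interior: approach from the left
      intro hint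
      have hWnhds : W ∈ nhds ((S, A) : ℝ × ℝ) := mem_interior_iff_mem_nhds.mp hint
      have hten : Filter.Tendsto (fun n : ℕ => ((S - 1 / (n + 1), A) : ℝ × ℝ))
          Filter.atTop (nhds (S, A)) := by
        have h1 : Filter.Tendsto (fun n : ℕ => S - 1 / ((n : ℝ) + 1))
            Filter.atTop (nhds S) := by
          have := tendsto_one_div_add_atTop_nhds_zero_nat (𝕜 := ℝ)
          have h2 := Filter.Tendsto.const_sub S this
          simpa using h2
        exact Filter.Tendsto.prodMk_nhds h1 tendsto_const_nhds
      have hev := hten.eventually_mem hWnhds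
      obtain ⟨n, hn⟩ := hev.exists
      have hpos' : (0 : ℝ) < 1 / ((n : ℝ) + 1) := by positivity
      have := hWsub hn
      simp only [Set.mem_setOf_eq] at this
      linarith [hSM]
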